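/- For any graph G of order n ≥ 2 that has a Hamiltonian path, ⌊2n/3⌋ + 1 ≤ χ_d^t(C(G)) ≤ n + ⌈n/2⌉. -/

import Mathlib

open SimpleGraph

/-- The central graph `C(G)`: subdivide each edge of `G` once (vertex `c_e` for each
edge `e`) and join all non-adjacent pairs of original vertices. -/
def centralGraph {V : Type*} (G : SimpleGraph V) : SimpleGraph (V ⊕ G.edgeSet) where
  Adj x y :=
    match x, y with
    | Sum.inl u, Sum.inl v => u ≠ v ∧ ¬ G.Adj u v
    | Sum.inl u, Sum.inr e => u ∈ (e : Sym2 V)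
    | Sum.inr e, Sum.inl u => u ∈ (e : Sym2 V)
    | Sum.inr _, Sum.inr _ => False
  symm := by
    constructor
    rintro (u | e) (v | f) h
    · exact ⟨h.1.symm, fun a => h.2 a.symm⟩
    · exact h
    · exact h
    · exact h
  loopless := by
    constructor
    rintro (u | e) h
    · exact h.1 rfl
    · exact h

/-- `f` is a total dominator coloring of `G`: a proper coloring such that every
vertex is adjacent to all vertices of some (nonempty) color class. -/
def IsTDColoring {V : Type*} (G : SimpleGraph V) (f : V → ℕ) : Prop :=
  (∀ u v, G.Adj u v → f u ≠ f v) ∧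
  ∀ v, ∃ c, (∃ w, f w = c) ∧ ∀ w, f w = c → G.Adj v w

/-- Total dominator chromatic number: minimum number of colors in a TDC. -/
noncomputable def tdcn {V : Type*} (G : SimpleGraph V) : ℕ :=
  sInf {k | ∃ f : V → ℕ, IsTDColoring G f ∧ ∀ v, f v < k}

/-- Total domination number. -/
noncomputable def tdn {V : Type*} (G : SimpleGraph V) : ℕ :=
  sInf {k | ∃ S : Set V, S.ncard = k ∧ ∀ v, ∃ u ∈ S, G.Adj v u}

/-- The join of two graphs. -/
def joinGraph {α β : Type*} (G : SimpleGraph α) (H : SimpleGraph β) :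
    SimpleGraph (α ⊕ β) where
  Adj x y :=
    match x, y with
    | Sum.inl u, Sum.inl v => G.Adj u v
    | Sum.inr u, Sum.inr v => H.Adj u v
    | Sum.inl _, Sum.inr _ => True
    | Sum.inr _, Sum.inl _ => True
  symm := by constructor; rintro (u | u) (v | v) h <;> first | exact h.symm | trivial
  loopless := by constructor; rintro (u | u) h <;> exact h.ne rfl

/-- The path graph on `n` vertices. -/
def pathG (n : ℕ) : SimpleGraph (Fin n) :=
  SimpleGraph.fromRel (fun i j => (i : ℕ) + 1 = (j : ℕ))

/-- The cycle graph on `n` vertices. -/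
def cycleG (n : ℕ) : SimpleGraph (ZMod n) :=
  SimpleGraph.fromRel (fun i j => i - j = 1)

/-- The double star `S_{1,n,n}`: center `0`, support vertices `1,...,n`
(adjacent to the center), each `i` with its own pendant `n+i`. -/
def doubleStar (n : ℕ) : SimpleGraph (Fin (2 * n + 1)) :=
  SimpleGraph.fromRel (fun a b =>
    ((a : ℕ) = 0 ∧ 1 ≤ (b : ℕ) ∧ (b : ℕ) ≤ n) ∨
    (1 ≤ (a : ℕ) ∧ (a : ℕ) ≤ n ∧ (b : ℕ) = (a : ℕ) + n))

/-- The disjoint union of a family of graphs. -/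
def sigmaGraph {ι : Type*} {V : ι → Type*} (G : ∀ i, SimpleGraph (V i)) :
    SimpleGraph (Σ i, V i) :=
  SimpleGraph.fromRel (fun x y =>
    ∃ (i : ι) (u v : V i), (G i).Adj u v ∧ x = ⟨i, u⟩ ∧ y = ⟨i, v⟩)
section AuxTDC

set_option linter.unusedSectionVars false
variable {V : Type*} [DecidableEq V] {G : SimpleGraph V}

namespace CentralAux

/-- index of a vertex in the list -/
def idx (s : List V) (w : V) : ℕ := s.idxOf w

lemma idx_lt {s : List V} {w : V} (h : w ∈ s) : idx s w < s.length :=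
  List.idxOf_lt_length_iff.2 h

lemma getElem_idx {s : List V} {w : V} (h : w ∈ s) :
    s[idx s w]'(idx_lt h) = w := List.getElem_idxOf _

lemma idx_getElem {s : List V} (hnd : s.Nodup) (j : ℕ) (hj : j < s.length) :
    idx s (s[j]'hj) = j := hnd.idxOf_getElem j hj

lemma idx_inj {s : List V} (hnd : s.Nodup) {u v : V} (hu : u ∈ s) (hv : v ∈ s)
    (h : idx s u = idx s v) : u = v := by
  have h1 := getElem_idx hu
  have h2 := getElem_idx hv
  rw [← h1, ← h2]
  congr 1

lemma adj_consec {s : List V} (hch : s.Chain' G.Adj) {j : ℕ} (hj : j + 1 < s.length) :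
    G.Adj (s[j]'(by omega)) (s[j+1]'hj) := by
  have := List.isChain_iff_getElem.1 hch j (by omega)
  simpa [List.get_eq_getElem] using this

end CentralAux
end AuxTDC
section AuxTDC2
set_option linter.unusedSectionVars false
set_option maxHeartbeats 1000000

namespace CentralAux

variable {V : Type*} [DecidableEq V] {G : SimpleGraph V}

lemma adj_inl_inl {u v : V} :
    (centralGraph G).Adj (Sum.inl u) (Sum.inl v) ↔ u ≠ v ∧ ¬ G.Adj u v := Iff.rfl

lemma adj_inl_inr {u : V} {e : G.edgeSet} :
    (centralGraph G).Adj (Sum.inl u) (Sum.inr e) ↔ u ∈ (e : Sym2 V) := Iff.rfl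

lemma adj_inr_inl {u : V} {e : G.edgeSet} :
    (centralGraph G).Adj (Sum.inr e) (Sum.inl u) ↔ u ∈ (e : Sym2 V) := Iff.rfl

lemma not_adj_inr_inr {e e' : G.edgeSet} :
    ¬ (centralGraph G).Adj (Sum.inr e) (Sum.inr e') := fun h => h

/-- min of the indices of the two endpoints -/
def emn (s : List V) : Sym2 V → ℕ :=
  Sym2.lift ⟨fun a b => min (idx s a) (idx s b), fun _ _ => min_comm _ _⟩

def emx (s : List V) : Sym2 V → ℕ :=
  Sym2.lift ⟨fun a b => max (idx s a) (idx s b), fun _ _ => max_comm _ _⟩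

@[simp] lemma emn_mk (s : List V) (a b : V) : emn s s(a, b) = min (idx s a) (idx s b) := rfl
@[simp] lemma emx_mk (s : List V) (a b : V) : emx s s(a, b) = max (idx s a) (idx s b) := rfl

/-- color of a designated path edge with smaller endpoint index `j` -/
def dval (s : List V) (j : ℕ) : ℕ :=
  if j % 2 = 0 then s.length + j / 2 else s.length + (s.length - 1) / 2

lemma dval_ge (s : List V) (j : ℕ) : s.length ≤ dval s j := by
  unfold dval; split <;> omega

lemma dval_inj (s : List V) {j j' : ℕ} (hj : j + 1 < s.length) (hj' : j' + 1 < s.length)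
    (hd : j % 2 = 0 ∨ j = s.length - 2) (hd' : j' % 2 = 0 ∨ j' = s.length - 2)
    (h : dval s j = dval s j') : j = j' := by
  unfold dval at h; split at h <;> split at h <;> omega

/-- the coloring of edge vertices -/
def eColor (s : List V) (z : Sym2 V) : ℕ :=
  if emx s z = emn s z + 1 ∧ (emn s z % 2 = 0 ∨ emn s z = s.length - 2) then
    dval s (emn s z)
  else s.length - 1

lemma eColor_ge (s : List V) (z : Sym2 V) : s.length - 1 ≤ eColor s z := by
  unfold eColor; split
  · have := dval_ge s (emn s z); omega
  · exact le_refl _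

lemma eColor_designated (s : List V) {j : ℕ} (hnd : s.Nodup) (hj : j + 1 < s.length)
    (hd : j % 2 = 0 ∨ j = s.length - 2) :
    eColor s s(s[j]'(by omega), s[j+1]'hj) = dval s j := by
  have h1 : idx s (s[j]'(by omega)) = j := idx_getElem hnd j (by omega)
  have h2 : idx s (s[j+1]'hj) = j + 1 := idx_getElem hnd (j+1) hj
  unfold eColor
  rw [emn_mk, emx_mk, h1, h2]
  rw [if_pos (by constructor <;> omega)]
  congr 1
  omega

/-- structure of eColor on an edge of `G` -/
lemma eColor_cases (s : List V) (hnd : s.Nodup) {a b : V} (ha : a ∈ s) (hb : b ∈ s)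
    (hab : a ≠ b) :
    eColor s s(a, b) = s.length - 1 ∨
    ∃ j, j + 1 < s.length ∧ (j % 2 = 0 ∨ j = s.length - 2) ∧
      eColor s s(a, b) = dval s j ∧
      ((idx s a = j ∧ idx s b = j + 1) ∨ (idx s b = j ∧ idx s a = j + 1)) := by
  have hia : idx s a < s.length := idx_lt ha
  have hib : idx s b < s.length := idx_lt hb
  have hne : idx s a ≠ idx s b := fun h => hab (idx_inj hnd ha hb h)
  unfold eColor
  rw [emn_mk, emx_mk]
  split
  · rename_i h
    right
    refine ⟨min (idx s a) (idx s b), by omega, by omega, rfl, by omega⟩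
  · left; rfl

end CentralAux
end AuxTDC2
section AuxTDC3
set_option linter.unusedSectionVars false
set_option maxHeartbeats 1000000

namespace CentralAux

variable {V : Type*} [DecidableEq V] {G : SimpleGraph V}

/-- the coloring witnessing the upper bound -/
def ubColoring (G : SimpleGraph V) (s : List V) : V ⊕ G.edgeSet → ℕ
  | Sum.inl w => idx s w - 1
  | Sum.inr e => eColor s (e : Sym2 V)

lemma upper_exists (s : List V) (hnd : s.Nodup) (hall : ∀ w, w ∈ s)
    (hch : s.Chain' G.Adj) (h2 : 2 ≤ s.length) :
    ∃ f : V ⊕ G.edgeSet → ℕ, IsTDColoring (centralGraph G) f ∧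
      ∀ v, f v < s.length + (s.length + 1) / 2 := by
  set n := s.length with hn
  have hlt : ∀ w, idx s w < n := fun w => idx_lt (hall w)
  refine ⟨ubColoring G s, ⟨?_, ?_⟩, ?_⟩
  · -- properness
    rintro (u | e) (v | e') hadj
    · -- inl inl
      obtain ⟨hne, hnadj⟩ := (adj_inl_inl (G := G)).1 hadj
      simp only [ubColoring]
      intro heq
      have hine : idx s u ≠ idx s v := fun h => hne (idx_inj hnd (hall u) (hall v) h)
      have hcase : (idx s u = 0 ∧ idx s v = 1) ∨ (idx s v = 0 ∧ idx s u = 1) := by omega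
      have hadj01 : G.Adj (s[0]'(by omega)) (s[1]'(by omega)) := adj_consec hch (by omega)
      rcases hcase with ⟨h0, h1⟩ | ⟨h0, h1⟩
      · have hu : u = s[0]'(by omega) := by
          have := getElem_idx (s := s) (hall u); rw [← this]; congr 1
        have hv : v = s[1]'(by omega) := by
          have := getElem_idx (s := s) (hall v); rw [← this]; congr 1
        exact hnadj (hu ▸ hv ▸ hadj01)
      · have hv : v = s[0]'(by omega) := by
          have := getElem_idx (s := s) (hall v); rw [← this]; congr 1
        have hu : u = s[1]'(by omega) := by
          have := getElem_idx (s := s) (hall u); rw [← this]; congr 1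
        exact hnadj (hu ▸ hv ▸ hadj01.symm)
    · -- inl inr
      simp only [ubColoring]
      have h1 := hlt u
      have h2' := eColor_ge s (e' : Sym2 V)
      omega
    · -- inr inl
      simp only [ubColoring]
      have h1 := hlt v
      have h2' := eColor_ge s (e : Sym2 V)
      omega
    · exact absurd hadj (not_adj_inr_inr)
  · -- total domination
    rintro (w | e)
    · -- original vertex w
      set j := idx s w with hjdef
      have hjlt : j < n := hlt w
      obtain ⟨jd, hjd1, hjd2, hjd3⟩ :
          ∃ jd, jd + 1 < n ∧ (jd % 2 = 0 ∨ jd = n - 2) ∧ (j = jd ∨ j = jd + 1) := by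
        refine ⟨if j % 2 = 1 then j - 1 else if j + 1 < n then j else n - 2, ?_⟩
        split_ifs <;> omega
      have hadjd : G.Adj (s[jd]'(by omega)) (s[jd+1]'hjd1) := adj_consec hch hjd1
      set E : G.edgeSet := ⟨s(s[jd]'(by omega), s[jd+1]'hjd1), G.mem_edgeSet.2 hadjd⟩ with hE
      refine ⟨dval s jd, ⟨Sum.inr E, ?_⟩, ?_⟩
      · simp only [ubColoring, hE]
        exact eColor_designated s hnd hjd1 hjd2
      · rintro (y | e') hfe
        · -- inl y can't have this color
          simp only [ubColoring] at hfe
          have := hlt y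
          have := dval_ge s jd
          omega
        · -- e' must be the designated edge
          simp only [ubColoring] at hfe
          obtain ⟨z, hz⟩ := e'
          induction z using Sym2.ind with
          | _ a b =>
            have hadjab : G.Adj a b := G.mem_edgeSet.1 hz
            have hab : a ≠ b := hadjab.ne
            rcases eColor_cases s hnd (hall a) (hall b) hab with hc | ⟨j', hj'1, hj'2, hj'3, hj'4⟩
            · simp only at hfe
              rw [hc] at hfe
              have := dval_ge s jd
              omega
            · simp only at hfe
              rw [hj'3] at hfe
              have hjj : j' = jd := dval_inj s hj'1 hjd1 hj'2 hjd2 hfe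
              subst hjj
              -- w is an endpoint of e' = s(a,b)
              rw [adj_inl_inr]
              simp only [Sym2.mem_iff]
              have hwa : w = s[idx s w]'(hlt w) := (getElem_idx (hall w)).symm
              rcases hj'4 with ⟨ha', hb'⟩ | ⟨hb', ha'⟩
              · rcases hjd3 with h | h
                · left
                  have : a = s[idx s a]'(hlt a) := (getElem_idx (hall a)).symm
                  rw [hwa, this]; congr 1; omega
                · right
                  have : b = s[idx s b]'(hlt b) := (getElem_idx (hall b)).symm
                  rw [hwa, this]; congr 1; omega
              · rcases hjd3 with h | h
                · right
                  have : b = s[idx s b]'(hlt b) := (getElem_idx (hall b)).symm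
                  rw [hwa, this]; congr 1; omega
                · left
                  have : a = s[idx s a]'(hlt a) := (getElem_idx (hall a)).symm
                  rw [hwa, this]; congr 1; omega
    · -- edge vertex
      obtain ⟨z, hz⟩ := e
      induction z using Sym2.ind with
      | _ a b =>
        have hadjab : G.Adj a b := G.mem_edgeSet.1 hz
        have hab : a ≠ b := hadjab.ne
        have hne : idx s a ≠ idx s b := fun h => hab (idx_inj hnd (hall a) (hall b) h)
        by_cases hbig : 2 ≤ idx s a ∨ 2 ≤ idx s b
        · -- use the singleton class of the endpoint with larger index
          obtain ⟨x, hx, hxbig⟩ : ∃ x, (x = a ∨ x = b) ∧ 2 ≤ idx s x := by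
            rcases hbig with h | h
            exacts [⟨a, Or.inl rfl, h⟩, ⟨b, Or.inr rfl, h⟩]
          refine ⟨idx s x - 1, ⟨Sum.inl x, rfl⟩, ?_⟩
          rintro (y | e'') hfe
          · simp only [ubColoring] at hfe
            have hyx : idx s y = idx s x := by omega
            have : y = x := idx_inj hnd (hall y) (hall x) hyx
            subst this
            rw [adj_inr_inl]
            simp only [Sym2.mem_iff]
            tauto
          · simp only [ubColoring] at hfe
            have := eColor_ge s ((e'' : G.edgeSet) : Sym2 V)
            have := hlt x
            omega
        · -- both endpoints have index 0 or 1 : use color 0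
          push_neg at hbig
          refine ⟨0, ⟨Sum.inl a, ?_⟩, ?_⟩
          · simp only [ubColoring]; omega
          · rintro (y | e'') hfe
            · simp only [ubColoring] at hfe
              have hy : idx s y ≤ 1 := by omega
              have : idx s y = idx s a ∨ idx s y = idx s b := by omega
              rw [adj_inr_inl]
              simp only [Sym2.mem_iff]
              rcases this with h | h
              · exact Or.inl (idx_inj hnd (hall y) (hall a) h)
              · exact Or.inr (idx_inj hnd (hall y) (hall b) h)
            · simp only [ubColoring] at hfe
              have := eColor_ge s ((e'' : G.edgeSet) : Sym2 V)
              omega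
  · -- color bound
    rintro (w | e)
    · simp only [ubColoring]
      have := hlt w
      omega
    · simp only [ubColoring]
      obtain ⟨z, hz⟩ := e
      induction z using Sym2.ind with
      | _ a b =>
        have hia := hlt a
        have hib := hlt b
        simp only
        unfold eColor
        rw [emn_mk, emx_mk]
        split
        · rename_i h
          unfold dval
          split <;> omega
        · omega

end CentralAux
end AuxTDC3
section AuxTDC4
set_option linter.unusedSectionVars false
set_option maxHeartbeats 1000000

namespace CentralAux

variable {V : Type*} [DecidableEq V] {G : SimpleGraph V}

lemma lower_bound [Fintype V] (s : List V) (hnd : s.Nodup) (hall : ∀ w, w ∈ s)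
    (hch : s.Chain' G.Adj) (h2 : 2 ≤ s.length) (k : ℕ) (f : V ⊕ G.edgeSet → ℕ)
    (hf : IsTDColoring (centralGraph G) f) (hfb : ∀ v, f v < k) :
    2 * s.length + 1 ≤ 3 * k := by
  classical
  letI : Fintype G.edgeSet := Fintype.ofFinite _
  set n := s.length with hn
  have hcardV : Fintype.card V = n := by
    have h1 : s.toFinset = Finset.univ :=
      Finset.eq_univ_iff_forall.2 (fun w => List.mem_toFinset.2 (hall w))
    calc Fintype.card V = Finset.univ.card := rfl
      _ = s.toFinset.card := by rw [h1]
      _ = n := List.toFinset_card_of_nodup hnd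
  -- color classes
  set cls : ℕ → Finset (V ⊕ G.edgeSet) :=
    fun c => Finset.univ.filter (fun y => f y = c) with hcls
  have hclsmem : ∀ (y) (c), y ∈ cls c ↔ f y = c := by
    intro y c; simp [hcls]
  -- dominating colors for edge vertices
  set DC : Finset ℕ := (Finset.range k).filter
      (fun c => (cls c).Nonempty ∧
        ∃ e : G.edgeSet, ∀ y ∈ cls c, ∃ x, y = Sum.inl x ∧ x ∈ (e : Sym2 V)) with hDC
  have hDC_struct : ∀ c ∈ DC, (cls c).Nonempty ∧
      ∃ e : G.edgeSet, ∀ y ∈ cls c, ∃ x, y = Sum.inl x ∧ x ∈ (e : Sym2 V) := by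
    intro c hc
    exact (Finset.mem_filter.1 hc).2
  set U : Finset V := Finset.univ.filter (fun v => f (Sum.inl v) ∈ DC) with hU
  have hUmem : ∀ v, v ∈ U ↔ f (Sum.inl v) ∈ DC := by
    intro v; simp [hU]
  -- every edge vertex gives a dominating color
  have h_edge_dom : ∀ e : G.edgeSet, ∃ c, c ∈ DC ∧
      ∀ y, f y = c → ∃ x, y = Sum.inl x ∧ x ∈ (e : Sym2 V) := by
    intro e
    obtain ⟨c, ⟨w₀, hw₀⟩, hdom⟩ := hf.2 (Sum.inr e)
    have hprop : ∀ y, f y = c → ∃ x, y = Sum.inl x ∧ x ∈ (e : Sym2 V) := by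
      rintro (x | e') hy
      · exact ⟨x, rfl, (adj_inr_inl).1 (hdom _ hy)⟩
      · exact absurd (hdom _ hy) not_adj_inr_inr
    refine ⟨c, ?_, hprop⟩
    rw [hDC, Finset.mem_filter, Finset.mem_range]
    refine ⟨hw₀ ▸ hfb w₀, ⟨w₀, (hclsmem _ _).2 hw₀⟩, e, fun y hy => hprop y ((hclsmem _ _).1 hy)⟩
  choose φe hφe1 hφe2 using h_edge_dom
  -- classes of dominating colors have at most 2 elements
  have hcls_card2 : ∀ c ∈ DC, (cls c).card ≤ 2 := by
    intro c hc
    obtain ⟨-, e, hprop⟩ := hDC_struct c hc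
    obtain ⟨⟨a, b⟩, hab⟩ := Quot.exists_rep (e : Sym2 V)
    have hsub : cls c ⊆ {Sum.inl a, Sum.inl b} := by
      intro y hy
      obtain ⟨x, rfl, hx⟩ := hprop y hy
      rw [← hab] at hx
      have : x = a ∨ x = b := Sym2.mem_iff.1 hx
      simp only [Finset.mem_insert, Finset.mem_singleton]
      rcases this with h | h <;> simp [h]
    calc (cls c).card ≤ ({Sum.inl a, Sum.inl b} : Finset (V ⊕ G.edgeSet)).card :=
          Finset.card_le_card hsub
      _ ≤ 2 := (Finset.card_insert_le _ _).trans (by simp)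
  -- |U| is the sum of the class sizes over DC
  have hUcard : U.card = ∑ c ∈ DC, (cls c).card := by
    rw [Finset.card_eq_sum_card_fiberwise (f := fun v => f (Sum.inl v)) (t := DC)
      (fun v hv => (hUmem v).1 hv)]
    refine Finset.sum_congr rfl (fun c hc => ?_)
    apply Finset.card_bij (fun v _ => Sum.inl v)
    · intro v hv
      rw [hclsmem]
      exact (Finset.mem_filter.1 hv).2
    · intro v1 h1 v2 h2 h
      exact Sum.inl.inj h
    · intro y hy
      obtain ⟨-, e, hprop⟩ := hDC_struct c hc
      obtain ⟨x, rfl, -⟩ := hprop y hy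
      have hfx : f (Sum.inl x) = c := (hclsmem _ _).1 hy
      refine ⟨x, Finset.mem_filter.2 ⟨(hUmem x).2 (hfx ▸ hc), hfx⟩, rfl⟩
  -- the path edges
  have hadj01 : G.Adj (s[0]'(by omega)) (s[1]'(by omega)) := adj_consec hch (by omega)
  set e₀ : G.edgeSet := ⟨s(s[0]'(by omega), s[1]'(by omega)), G.mem_edgeSet.2 hadj01⟩ with he₀
  set pedge : ℕ → G.edgeSet := fun j =>
    if h : j + 1 < n then
      ⟨s(s[j]'(by omega), s[j+1]'h), G.mem_edgeSet.2 (adj_consec hch h)⟩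
    else e₀ with hpedge_def
  have hpedge : ∀ (j) (h : j + 1 < n),
      ((pedge j : G.edgeSet) : Sym2 V) = s(s[j]'(by omega), s[j+1]'h) := by
    intro j h
    simp only [hpedge_def, dif_pos h]
  set φ : ℕ → ℕ := fun j => φe (pedge j) with hφ
  -- fiber bound
  have hmemfib : ∀ c, ∀ x, Sum.inl x ∈ cls c →
      ∀ j ∈ (Finset.range (n-1)).filter (fun j => φ j = c),
        idx s x = j ∨ idx s x = j + 1 := by
    intro c x hx j hj
    obtain ⟨hjr, hjc⟩ := Finset.mem_filter.1 hj
    have hjn : j + 1 < n := by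
      have := Finset.mem_range.1 hjr; omega
    have hfx : f (Sum.inl x) = φe (pedge j) := by
      rw [(hclsmem _ _).1 hx, ← hjc]
    obtain ⟨x', hxx', hx'⟩ := hφe2 (pedge j) (Sum.inl x) hfx
    have : x' = x := (Sum.inl.inj hxx').symm
    subst this
    rw [hpedge j hjn] at hx'
    rcases Sym2.mem_iff.1 hx' with h | h
    · left; rw [h]; exact idx_getElem hnd j (by omega)
    · right; rw [h]; exact idx_getElem hnd (j+1) hjn
  have hfib : ∀ c ∈ DC,
      ((Finset.range (n-1)).filter (fun j => φ j = c)).card + (cls c).card ≤ 3 := by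
    intro c hc
    obtain ⟨⟨y₀, hy₀⟩, e, hprop⟩ := hDC_struct c hc
    obtain ⟨x₀, hy₀x, hx₀e⟩ := hprop y₀ hy₀
    rw [hy₀x] at hy₀
    by_cases h1 : ∃ y₁ ∈ cls c, y₁ ≠ Sum.inl x₀
    · obtain ⟨y₁, hy₁, hy₁ne⟩ := h1
      obtain ⟨x₁, hy₁x, hx₁e⟩ := hprop y₁ hy₁
      rw [hy₁x] at hy₁ hy₁ne
      have hx01 : x₀ ≠ x₁ := fun h => hy₁ne (by rw [h])
      have hixne : idx s x₀ ≠ idx s x₁ :=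
        fun h => hx01 (idx_inj hnd (hall x₀) (hall x₁) h)
      have hsubfib : (Finset.range (n-1)).filter (fun j => φ j = c) ⊆
          {min (idx s x₀) (idx s x₁)} := by
        intro j hj
        have h0 := hmemfib c x₀ hy₀ j hj
        have h1' := hmemfib c x₁ hy₁ j hj
        simp only [Finset.mem_singleton]
        omega
      have hc1 : ((Finset.range (n-1)).filter (fun j => φ j = c)).card ≤ 1 :=
        (Finset.card_le_card hsubfib).trans (by simp)
      have := hcls_card2 c hc
      omega
    · push_neg at h1
      have hcc : cls c = {Sum.inl x₀} := Finset.eq_singleton_iff_unique_mem.2 ⟨hy₀, h1⟩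
      have hsubfib : (Finset.range (n-1)).filter (fun j => φ j = c) ⊆
          {idx s x₀ - 1, idx s x₀} := by
        intro j hj
        have h0 := hmemfib c x₀ hy₀ j hj
        simp only [Finset.mem_insert, Finset.mem_singleton]
        omega
      have hc1 : ((Finset.range (n-1)).filter (fun j => φ j = c)).card ≤ 2 :=
        (Finset.card_le_card hsubfib).trans ((Finset.card_insert_le _ _).trans (by simp))
      have : (cls c).card = 1 := by rw [hcc]; simp
      omega
  -- main counting inequality
  have hkey : n - 1 + U.card ≤ 3 * DC.card := by
    have key1 : (Finset.range (n-1)).card =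
        ∑ c ∈ DC, ((Finset.range (n-1)).filter (fun j => φ j = c)).card :=
      Finset.card_eq_sum_card_fiberwise (f := φ) (s := Finset.range (n-1)) (t := DC)
        (fun j _ => hφe1 (pedge j))
    rw [Finset.card_range] at key1
    have key2 : ∑ c ∈ DC,
        (((Finset.range (n-1)).filter (fun j => φ j = c)).card + (cls c).card) ≤ 3 * DC.card := by
      calc ∑ c ∈ DC, (((Finset.range (n-1)).filter (fun j => φ j = c)).card + (cls c).card)
          ≤ ∑ _c ∈ DC, 3 := Finset.sum_le_sum hfib
        _ = 3 * DC.card := by rw [Finset.sum_const, smul_eq_mul, mul_comm]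
    rw [Finset.sum_add_distrib] at key2
    omega
  -- the rest of the vertices
  set RS : Finset V := Uᶜ with hRS
  have hUR : U.card + RS.card = n := by
    rw [hRS, Finset.card_add_card_compl, hcardV]
  set RC : Finset ℕ := RS.image (fun v => f (Sum.inl v)) with hRC
  have hRCcard : RC.card = RS.card := by
    apply Finset.card_image_of_injOn
    intro v hv w hw hvw
    by_contra hne
    by_cases hadj : G.Adj v w
    · set Evw : G.edgeSet := ⟨s(v,w), G.mem_edgeSet.2 hadj⟩ with hEvw
      set c : ℕ := φe Evw with hcdef
      have hcDC : c ∈ DC := hφe1 Evw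
      have hprop := hφe2 Evw
      obtain ⟨⟨y₀, hy₀⟩, -⟩ := hDC_struct c hcDC
      obtain ⟨x, hyx, hxe⟩ := hprop y₀ ((hclsmem _ _).1 hy₀)
      have hfx : f (Sum.inl x) = c := by rw [← hyx]; exact (hclsmem _ _).1 hy₀
      have hxU : x ∈ U := (hUmem x).2 (hfx ▸ hcDC)
      have : x = v ∨ x = w := Sym2.mem_iff.1 hxe
      rcases this with rfl | rfl
      · exact (Finset.mem_compl.1 hv) hxU
      · exact (Finset.mem_compl.1 hw) hxU
    · exact hf.1 (Sum.inl v) (Sum.inl w) (adj_inl_inl.2 ⟨hne, hadj⟩) hvw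
  have hdisj : Disjoint DC RC := by
    rw [Finset.disjoint_right]
    intro c hcRC hcDC
    obtain ⟨v, hv, rfl⟩ := Finset.mem_image.1 hcRC
    exact (Finset.mem_compl.1 hv) ((hUmem v).2 hcDC)
  have hc0DC : f (Sum.inr e₀) ∉ DC := by
    intro h
    obtain ⟨-, e, hprop⟩ := hDC_struct _ h
    obtain ⟨x, hx, -⟩ := hprop (Sum.inr e₀) ((hclsmem _ _).2 rfl)
    cases hx
  have hsub : DC ∪ RC ⊆ Finset.range k := by
    intro c hc
    rcases Finset.mem_union.1 hc with h | h
    · exact Finset.mem_range.2 (Finset.mem_range.1 (Finset.mem_filter.1 h).1)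
    · obtain ⟨v, -, rfl⟩ := Finset.mem_image.1 h
      exact Finset.mem_range.2 (hfb _)
  by_cases hc0RC : f (Sum.inr e₀) ∈ RC
  · have hRS1 : 1 ≤ RS.card := by
      rw [← hRCcard]
      exact Finset.card_pos.2 ⟨_, hc0RC⟩
    have hunion : DC.card + RC.card ≤ k := by
      rw [← Finset.card_union_of_disjoint hdisj]
      exact (Finset.card_le_card hsub).trans_eq (Finset.card_range k)
    omega
  · have hnotmem : f (Sum.inr e₀) ∉ DC ∪ RC := by
      rw [Finset.mem_union]
      rintro (h | h)
      exacts [hc0DC h, hc0RC h]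
    have hsub2 : insert (f (Sum.inr e₀)) (DC ∪ RC) ⊆ Finset.range k :=
      Finset.insert_subset (Finset.mem_range.2 (hfb _)) hsub
    have hunion : DC.card + RC.card + 1 ≤ k := by
      have h1 : (insert (f (Sum.inr e₀)) (DC ∪ RC)).card = DC.card + RC.card + 1 := by
        rw [Finset.card_insert_of_notMem hnotmem, Finset.card_union_of_disjoint hdisj]
      rw [← h1]
      exact (Finset.card_le_card hsub2).trans_eq (Finset.card_range k)
    omega

end CentralAux
end AuxTDC4
theorem tdcn_central_bounds_hamiltonian {V : Type*} [Fintype V]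
    (G : SimpleGraph V) (n : ℕ) (hn : Fintype.card V = n) (hn2 : 2 ≤ n)
    (hham : ∃ (u v : V) (p : G.Walk u v), p.IsPath ∧ ∀ w, w ∈ p.support) :
    2 * n / 3 + 1 ≤ tdcn (centralGraph G) ∧
    tdcn (centralGraph G) ≤ n + (n + 1) / 2 := by
  classical
  obtain ⟨u, v, p, hp, hsup⟩ := hham
  set s : List V := p.support with hs
  have hnd : s.Nodup := hp.support_nodup
  have hch : s.Chain' G.Adj := p.isChain_adj_support
  have hall : ∀ w, w ∈ s := hsup
  have hlen : s.length = n := by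
    have h1 : s.toFinset = Finset.univ :=
      Finset.eq_univ_iff_forall.2 (fun w => List.mem_toFinset.2 (hall w))
    calc s.length = s.toFinset.card := (List.toFinset_card_of_nodup hnd).symm
      _ = Fintype.card V := by rw [h1]; rfl
      _ = n := hn
  have h2 : 2 ≤ s.length := by omega
  obtain ⟨f, hf, hfb⟩ := CentralAux.upper_exists (G := G) s hnd hall hch h2
  rw [hlen] at hfb
  have hmem : (n + (n+1)/2) ∈
      {k | ∃ f : (V ⊕ G.edgeSet) → ℕ, IsTDColoring (centralGraph G) f ∧ ∀ v, f v < k} :=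
    ⟨f, hf, hfb⟩
  constructor
  · have hSne : {k | ∃ f : (V ⊕ G.edgeSet) → ℕ,
        IsTDColoring (centralGraph G) f ∧ ∀ v, f v < k}.Nonempty := ⟨_, hmem⟩
    have hInf : ∃ g : (V ⊕ G.edgeSet) → ℕ, IsTDColoring (centralGraph G) g ∧
        ∀ v, g v < tdcn (centralGraph G) := Nat.sInf_mem hSne
    obtain ⟨g, hg, hgb⟩ := hInf
    have hlow := CentralAux.lower_bound s hnd hall hch h2 _ g hg hgb
    rw [hlen] at hlow
    omega
  · exact Nat.sInf_le hmem
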